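/- Let (b_j)_{j≥1} be a sequence of strictly positive real numbers such that for every constant C > 0 the series ∑_{j≥1} exp(-C/b_j²) diverges. Then for every t > 0, γ({y ∈ ℝ^ℕ : b_j·|y_j| ≤ t for all j}) = 0; consequently, for γ-almost every y one has sup_{j≥1} b_j·|y_j| = ∞. -/

import Mathlib

open MeasureTheory ProbabilityTheory Real

noncomputable def gc : ℝ := Real.exp (-1) / Real.sqrt (2 * π)

lemma gc_pos : 0 < gc := by
  apply div_pos (Real.exp_pos _)
  apply Real.sqrt_pos.2
  positivity

lemma gauss_Ioc_lower (a : ℝ) (ha : 0 ≤ a) :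
    ENNReal.ofReal (gc * Real.exp (-a ^ 2)) ≤ gaussianReal 0 1 (Set.Ioc a (a + 1)) := by
  rw [gaussianReal_apply 0 one_ne_zero]
  have h1 : ENNReal.ofReal (gc * Real.exp (-a ^ 2))
      = ∫⁻ _x in Set.Ioc a (a + 1), ENNReal.ofReal (gc * Real.exp (-a ^ 2)) ∂volume := by
    rw [setLIntegral_const, Real.volume_Ioc]
    simp
  rw [h1]
  apply setLIntegral_mono (measurable_gaussianPDF 0 1)
  intro x hx
  unfold gaussianPDF
  apply ENNReal.ofReal_le_ofReal
  unfold gaussianPDFReal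
  simp only [NNReal.coe_one, mul_one, sub_zero]
  rw [gc, div_mul_eq_mul_div, ← Real.exp_add, div_eq_inv_mul]
  apply mul_le_mul_of_nonneg_left ?_ (by positivity)
  rw [Real.exp_le_exp]
  have hx1 : 0 < x := lt_of_le_of_lt ha hx.1
  have hx2 : x ≤ a + 1 := hx.2
  nlinarith [sq_nonneg (a - 1), sq_nonneg x]

lemma gc_le_one : gc ≤ 1 := by
  rw [gc, div_le_one (Real.sqrt_pos.2 (by positivity))]
  calc Real.exp (-1) ≤ 1 := Real.exp_le_one_iff.2 (by norm_num)
    _ ≤ Real.sqrt (2 * π) := by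
        rw [show (1:ℝ) = Real.sqrt 1 by simp]
        exact Real.sqrt_le_sqrt (by nlinarith [Real.pi_gt_three])

lemma gcexp_le_one {a : ℝ} : gc * Real.exp (-a ^ 2) ≤ 1 := by
  calc gc * Real.exp (-a ^ 2) ≤ 1 * 1 := by
        apply mul_le_mul gc_le_one (Real.exp_le_one_iff.2 (neg_nonpos.2 (sq_nonneg a)))
          (Real.exp_pos _).le zero_le_one
    _ = 1 := one_mul 1

lemma gauss_ball_upper (a : ℝ) (ha : 0 ≤ a) :
    (gaussianReal 0 1 {x : ℝ | |x| ≤ a}).toReal ≤ 1 - gc * Real.exp (-a ^ 2) := by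
  set μ := gaussianReal 0 1
  have hdisj : Disjoint {x : ℝ | |x| ≤ a} (Set.Ioc a (a + 1)) := by
    rw [Set.disjoint_left]
    intro x hx hx2
    exact absurd hx2.1 (not_lt.2 ((le_abs_self x).trans hx))
  have hmeas : MeasurableSet (Set.Ioc a (a + 1)) := measurableSet_Ioc
  have hsum : μ {x : ℝ | |x| ≤ a} + μ (Set.Ioc a (a + 1)) ≤ 1 := by
    rw [← measure_union hdisj hmeas]
    exact (measure_mono (Set.subset_univ _)).trans_eq (measure_univ)
  have h1 : μ {x : ℝ | |x| ≤ a} ≤ 1 - ENNReal.ofReal (gc * Real.exp (-a ^ 2)) := by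
    have := gauss_Ioc_lower a ha
    calc μ {x : ℝ | |x| ≤ a} ≤ 1 - μ (Set.Ioc a (a + 1)) := by
          apply ENNReal.le_sub_of_add_le_right (measure_ne_top _ _)
          exact hsum
      _ ≤ 1 - ENNReal.ofReal (gc * Real.exp (-a ^ 2)) := by
          exact tsub_le_tsub_left this 1
  have h2 := ENNReal.toReal_mono (by simp) h1
  rw [ENNReal.toReal_sub_of_le (by
      rw [← ENNReal.ofReal_one]; exact ENNReal.ofReal_le_ofReal gcexp_le_one)
      (by simp)] at h2
  rw [ENNReal.toReal_ofReal (mul_nonneg gc_pos.le (Real.exp_pos _).le)] at h2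
  simpa using h2

/-- `γ` is the countable product `⨂_{j ∈ ℕ} N(0,1)` of standard Gaussian measures on `ℝ^ℕ`,
characterized as the (unique) probability measure on `ℕ → ℝ` whose finite-dimensional cylinder
probabilities are products of standard Gaussian probabilities. -/
def IsGaussianProductMeasure (γ : Measure (ℕ → ℝ)) : Prop :=
  IsProbabilityMeasure γ ∧
    ∀ (s : Finset ℕ) (B : ℕ → Set ℝ), (∀ j ∈ s, MeasurableSet (B j)) →
      γ {y | ∀ j ∈ s, y j ∈ B j} = ∏ j ∈ s, gaussianReal 0 1 (B j)

/-- If `b j > 0` and `∑ j, exp (-C / (b j)²)` diverges for every `C > 0`, then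
for every `t > 0` the set `{y | ∀ j, b j * |y j| ≤ t}` is `γ`-null; consequently, for
`γ`-a.e. `y` one has `sup_j b j * |y j| = ∞`, i.e. for every `T` there is `j` with
`b j * |y j| > T`. -/
theorem stmt_4 (γ : Measure (ℕ → ℝ)) (hγ : IsGaussianProductMeasure γ)
    (b : ℕ → ℝ) (hb : ∀ j, 0 < b j)
    (hdiv : ∀ C : ℝ, 0 < C → ¬ Summable fun j => Real.exp (-C / (b j) ^ 2)) :
    (∀ t : ℝ, 0 < t → γ {y | ∀ j, b j * |y j| ≤ t} = 0) ∧
      ∀ᵐ y ∂γ, ∀ T : ℝ, ∃ j, T < b j * |y j| := by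
  obtain ⟨hprob, hcyl⟩ := hγ
  have key : ∀ t : ℝ, 0 < t → γ {y | ∀ j, b j * |y j| ≤ t} = 0 := by
    intro t ht
    set S : Set (ℕ → ℝ) := {y | ∀ j, b j * |y j| ≤ t} with hS
    set p : ℕ → ℝ := fun j => gc * Real.exp (-(t / b j) ^ 2) with hpdef
    set B : ℕ → Set ℝ := fun j => {x | |x| ≤ t / b j} with hBdef
    have hBIcc : ∀ j, B j = Set.Icc (-(t / b j)) (t / b j) := fun j => by
      ext x; simp [hBdef, Set.mem_Icc, abs_le]
    -- bound for every n
    have hbound : ∀ n : ℕ, (γ S).toReal ≤ Real.exp (-(∑ j ∈ Finset.range n, p j)) := by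
      intro n
      have hsub : S ⊆ {y : ℕ → ℝ | ∀ j ∈ Finset.range n, y j ∈ B j} := by
        intro y hy j _
        have := hy j
        simp only [hBdef, Set.mem_setOf_eq]
        rw [le_div_iff₀ (hb j), mul_comm]
        exact this
      have hmeasB : ∀ j ∈ Finset.range n, MeasurableSet (B j) := by
        intro j _
        rw [hBIcc j]; exact measurableSet_Icc
      have h1 : γ S ≤ ∏ j ∈ Finset.range n, gaussianReal 0 1 (B j) := by
        rw [← hcyl (Finset.range n) B hmeasB]
        exact measure_mono hsub
      have hfin : (∏ j ∈ Finset.range n, gaussianReal 0 1 (B j)) ≠ ⊤ :=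
        (ENNReal.prod_lt_top (fun j _ => (measure_ne_top _ _).lt_top)).ne
      have h2 := ENNReal.toReal_mono hfin h1
      rw [ENNReal.toReal_prod] at h2
      refine h2.trans ?_
      calc ∏ j ∈ Finset.range n, (gaussianReal 0 1 (B j)).toReal
          ≤ ∏ j ∈ Finset.range n, Real.exp (-p j) := by
            apply Finset.prod_le_prod (fun j _ => ENNReal.toReal_nonneg)
            intro j _
            have ha : (0:ℝ) ≤ t / b j := le_of_lt (div_pos ht (hb j))
            have h3 := gauss_ball_upper (t / b j) ha
            have h4 := Real.add_one_le_exp (-p j)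
            calc ((gaussianReal 0 1) (B j)).toReal
                = ((gaussianReal 0 1) {x : ℝ | |x| ≤ t / b j}).toReal := rfl
              _ ≤ 1 - p j := h3
              _ ≤ Real.exp (-p j) := by linarith
        _ = Real.exp (-(∑ j ∈ Finset.range n, p j)) := by
            rw [← Real.exp_sum, Finset.sum_neg_distrib]
    -- divergence of partial sums
    have hnsum : ¬ Summable p := by
      intro hsum
      apply hdiv (t ^ 2) (by positivity)
      have h := hsum.mul_left gc⁻¹
      have : (fun j => gc⁻¹ * p j) = fun j => Real.exp (-t ^ 2 / b j ^ 2) := by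
        funext j
        show gc⁻¹ * (gc * Real.exp (-(t / b j) ^ 2)) = _
        rw [inv_mul_cancel_left₀ gc_pos.ne']
        congr 1
        rw [div_pow]
        ring
      rwa [this] at h
    have hpnn : ∀ j, 0 ≤ p j := fun j => mul_nonneg gc_pos.le (Real.exp_pos _).le
    have htend : Filter.Tendsto (fun n => ∑ j ∈ Finset.range n, p j) Filter.atTop Filter.atTop :=
      (not_summable_iff_tendsto_nat_atTop_of_nonneg hpnn).1 hnsum
    have hexp : Filter.Tendsto (fun n => Real.exp (-(∑ j ∈ Finset.range n, p j)))
        Filter.atTop (nhds 0) :=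
      Real.tendsto_exp_atBot.comp (Filter.tendsto_neg_atTop_atBot.comp htend)
    have hle0 : (γ S).toReal ≤ 0 := ge_of_tendsto' hexp hbound
    have : (γ S).toReal = 0 := le_antisymm hle0 ENNReal.toReal_nonneg
    rcases (ENNReal.toReal_eq_zero_iff _).1 this with h | h
    · exact h
    · exact absurd h (measure_ne_top _ _)
  refine ⟨key, ?_⟩
  rw [MeasureTheory.ae_iff]
  refine measure_mono_null (t := ⋃ n : ℕ, {y : ℕ → ℝ | ∀ j, b j * |y j| ≤ (n : ℝ) + 1}) ?_ ?_
  · intro y hy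
    simp only [Set.mem_setOf_eq, not_forall, not_exists, not_lt] at hy
    obtain ⟨T, hT⟩ := hy
    refine Set.mem_iUnion.2 ⟨⌈T⌉₊, fun j => (hT j).trans ?_⟩
    exact (Nat.le_ceil T).trans (by linarith)
  · apply measure_iUnion_null
    intro n
    exact key ((n : ℝ) + 1) (by positivity)
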